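/- Let n ≥ 1, N ≥ 2, and let H(z,x) be a convergent power series in (z,x) ∈ ℂ^n × ℂ with H(0,0) ≠ 0. For r = 1,…,N−1 let P_r be a polynomial in N variables whose coefficients are formal power series in x with no term independent of x and whose x-coefficients are convergent power series in z, and let χ_r(z,x) = Σ_{k≥0} χ_{r,k}(z) x^k with each χ_{r,k} convergent. Suppose F₁,…,F_N are formal power series F_l(z,x) = Σ_{k≥0} F_{l,k}(z) x^k (each F_{l,k} a formal power series in z) such that every F_{N,k} is convergent, and the following identities hold in ℂ[[z,x]]: (F₁ + F_N²)·H + P₁(F₁,…,F_N) = χ₁, and F_r·H + P_r(F₁,…,F_N) = χ_r for every r = 2,…,N−1. Then every coefficient series F_{l,k}(z), for 1 ≤ l ≤ N−1 and k ≥ 0, is a convergent power series. -/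

import Mathlib

/-!
STATEMENT 6.
Formal power series in `(z,x) ∈ ℂ^n × ℂ` are identified with elements of
`PowerSeries (MvPowerSeries (Fin n) ℂ)`; convergence means a geometric coefficient bound
(positive radius of convergence).

Let `H(z,x)` be convergent with `H(0,0) ≠ 0`.  For `r = 1,…,N−1` let `P_r` be a polynomial
in `N` variables whose coefficients are formal power series in `x` with no term independent
of `x` and with convergent `x`-coefficients, and let `χ_r` have convergent `x`-coefficients.
Suppose `F₁,…,F_N ∈ ℂ[[z,x]]` are such that all `x`-coefficients of `F_N` are convergent
and `(F₁ + F_N²)·H + P₁(F₁,…,F_N) = χ₁` and `F_r·H + P_r(F₁,…,F_N) = χ_r` for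
`r = 2,…,N−1`.  Then all `x`-coefficients `F_{l,k}(z)`, `1 ≤ l ≤ N−1`, are convergent.

(Below indices are 0-based: `F` is indexed by `Fin N`, the equations by `Fin (N−1)`;
the equation of index `0` is the special one, and `F_N` is `F ⟨N−1,_⟩`.)
-/

open Complex

/-- total degree of a multi-index -/
def totalDeg {σ : Type*} (m : σ →₀ ℕ) : ℕ := m.sum fun _ e => e

/-- A multivariate formal power series is convergent (has positive radius of convergence)
iff its coefficients satisfy a bound `‖c_m‖ ≤ C · r^{|m|}`. -/
def PSConv {σ : Type*} (F : MvPowerSeries σ ℂ) : Prop :=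
  ∃ C r : ℝ, 0 < r ∧ ∀ m : σ →₀ ℕ, ‖MvPowerSeries.coeff m F‖ ≤ C * r ^ totalDeg m

/-- Joint convergence of a formal power series in `(z,x)`. -/
def PS2Conv {n : ℕ} (H : PowerSeries (MvPowerSeries (Fin n) ℂ)) : Prop :=
  ∃ C r : ℝ, 0 < r ∧ ∀ (k : ℕ) (m : Fin n →₀ ℕ),
    ‖MvPowerSeries.coeff m (PowerSeries.coeff k H)‖ ≤
      C * r ^ (k + totalDeg m)

lemma totalDeg_zero {σ : Type*} : totalDeg (0 : σ →₀ ℕ) = 0 := Finsupp.sum_zero_index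

lemma totalDeg_add {σ : Type*} (a b : σ →₀ ℕ) :
    totalDeg (a + b) = totalDeg a + totalDeg b :=
  Finsupp.sum_add_index' (fun _ => rfl) (fun _ _ _ => rfl)

lemma totalDeg_pos {σ : Type*} {m : σ →₀ ℕ} (h : m ≠ 0) : 1 ≤ totalDeg m := by
  obtain ⟨i, hi⟩ : ∃ i, m i ≠ 0 := by
    by_contra h'; push_neg at h'; exact h (Finsupp.ext h')
  have hmem : i ∈ m.support := Finsupp.mem_support_iff.2 hi
  calc 1 ≤ m i := Nat.one_le_iff_ne_zero.2 hi
  _ ≤ totalDeg m := Finset.single_le_sum (fun _ _ => Nat.zero_le _) hmem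

lemma psconv_norm {σ : Type*} {F : MvPowerSeries σ ℂ} (h : PSConv F) :
    ∃ C r : ℝ, 0 ≤ C ∧ 1 ≤ r ∧ ∀ m, ‖MvPowerSeries.coeff m F‖ ≤ C * r ^ totalDeg m := by
  obtain ⟨C, r, hr, hb⟩ := h
  have hC : 0 ≤ C := by
    have := hb 0
    simp only [totalDeg_zero, pow_zero, mul_one] at this
    exact le_trans (norm_nonneg _) this
  refine ⟨C, max r 1, hC, le_max_right _ _, fun m => ?_⟩
  refine le_trans (hb m) (mul_le_mul_of_nonneg_left ?_ hC)
  exact pow_le_pow_left₀ hr.le (le_max_left _ _) _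

lemma psconv_zero {σ : Type*} : PSConv (0 : MvPowerSeries σ ℂ) :=
  ⟨0, 1, one_pos, fun m => by simp⟩

lemma psconv_one {σ : Type*} : PSConv (1 : MvPowerSeries σ ℂ) := by
  classical
  refine ⟨1, 1, one_pos, fun m => ?_⟩
  rw [MvPowerSeries.coeff_one]
  split_ifs <;> simp

lemma PSConv.add {σ : Type*} {F G : MvPowerSeries σ ℂ} (hF : PSConv F) (hG : PSConv G) :
    PSConv (F + G) := by
  obtain ⟨C₁, r₁, hC₁, hr₁, hb₁⟩ := psconv_norm hF
  obtain ⟨C₂, r₂, hC₂, hr₂, hb₂⟩ := psconv_norm hG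
  refine ⟨C₁ + C₂, max r₁ r₂, lt_of_lt_of_le one_pos (le_trans hr₁ (le_max_left _ _)), fun m => ?_⟩
  rw [map_add]
  calc ‖MvPowerSeries.coeff m F + MvPowerSeries.coeff m G‖
      ≤ ‖MvPowerSeries.coeff m F‖ + ‖MvPowerSeries.coeff m G‖ := norm_add_le _ _
    _ ≤ C₁ * r₁ ^ totalDeg m + C₂ * r₂ ^ totalDeg m := add_le_add (hb₁ m) (hb₂ m)
    _ ≤ C₁ * (max r₁ r₂) ^ totalDeg m + C₂ * (max r₁ r₂) ^ totalDeg m := by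
        gcongr <;> simp [le_max_left, le_max_right]
    _ = (C₁ + C₂) * (max r₁ r₂) ^ totalDeg m := by ring

lemma PSConv.neg {σ : Type*} {F : MvPowerSeries σ ℂ} (hF : PSConv F) : PSConv (-F) := by
  obtain ⟨C, r, hr, hb⟩ := hF
  exact ⟨C, r, hr, fun m => by rw [map_neg, norm_neg]; exact hb m⟩

lemma PSConv.sub {σ : Type*} {F G : MvPowerSeries σ ℂ} (hF : PSConv F) (hG : PSConv G) :
    PSConv (F - G) := by
  rw [sub_eq_add_neg]; exact hF.add hG.neg

lemma card_antidiagonal_le {σ : Type*} [DecidableEq σ] (m : σ →₀ ℕ) :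
    (Finset.card (Finset.HasAntidiagonal.antidiagonal m) : ℝ) ≤ 2 ^ totalDeg m := by
  classical
  have h1 : (Finset.HasAntidiagonal.antidiagonal m).card ≤ (Finset.Iic m).card := by
    apply Finset.card_le_card_of_injOn Prod.fst
    · intro x hx
      rw [Finset.mem_coe, Finset.HasAntidiagonal.mem_antidiagonal] at hx
      exact Finset.mem_Iic.2 (le_iff_exists_add.2 ⟨x.2, hx.symm⟩)
    · intro x hx y hy h
      rw [Finset.mem_coe, Finset.HasAntidiagonal.mem_antidiagonal] at hx hy
      have : x.2 = y.2 := by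
        apply add_left_cancel (a := x.1)
        rw [hx, h, hy]
      exact Prod.ext h this
  have h2 : (Finset.Iic m).card ≤ 2 ^ totalDeg m := by
    rw [Finsupp.card_Iic]
    calc ∏ i ∈ m.support, (Finset.Iic (m i)).card
        = ∏ i ∈ m.support, (m i + 1) := by
          refine Finset.prod_congr rfl fun i _ => ?_
          rw [Nat.card_Iic]
      _ ≤ ∏ i ∈ m.support, 2 ^ (m i) := by
          refine Finset.prod_le_prod' fun i _ => ?_
          exact Nat.succ_le_of_lt Nat.lt_two_pow_self
      _ = 2 ^ totalDeg m := by
          rw [Finset.prod_pow_eq_pow_sum]; rfl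
  calc ((Finset.HasAntidiagonal.antidiagonal m).card : ℝ) ≤ ((Finset.Iic m).card : ℝ) := by exact_mod_cast h1
    _ ≤ ((2:ℕ) ^ totalDeg m : ℕ) := by exact_mod_cast h2
    _ = 2 ^ totalDeg m := by push_cast; ring

lemma PSConv.mul {σ : Type*} {F G : MvPowerSeries σ ℂ} (hF : PSConv F) (hG : PSConv G) :
    PSConv (F * G) := by
  classical
  obtain ⟨C₁, r₁, hC₁, hr₁, hb₁⟩ := psconv_norm hF
  obtain ⟨C₂, r₂, hC₂, hr₂, hb₂⟩ := psconv_norm hG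
  set r := max r₁ r₂ with hrdef
  have hr : 1 ≤ r := le_trans hr₁ (le_max_left _ _)
  refine ⟨C₁ * C₂, 2 * r, by positivity, fun m => ?_⟩
  rw [MvPowerSeries.coeff_mul]
  calc ‖∑ p ∈ Finset.HasAntidiagonal.antidiagonal m, MvPowerSeries.coeff p.1 F * MvPowerSeries.coeff p.2 G‖
      ≤ ∑ p ∈ Finset.HasAntidiagonal.antidiagonal m, ‖MvPowerSeries.coeff p.1 F * MvPowerSeries.coeff p.2 G‖ :=
        norm_sum_le _ _
    _ ≤ ∑ _p ∈ Finset.HasAntidiagonal.antidiagonal m, C₁ * C₂ * r ^ totalDeg m := by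
        refine Finset.sum_le_sum fun p hp => ?_
        rw [Finset.HasAntidiagonal.mem_antidiagonal] at hp
        rw [norm_mul]
        calc ‖MvPowerSeries.coeff p.1 F‖ * ‖MvPowerSeries.coeff p.2 G‖
            ≤ (C₁ * r₁ ^ totalDeg p.1) * (C₂ * r₂ ^ totalDeg p.2) :=
              mul_le_mul (hb₁ p.1) (hb₂ p.2) (norm_nonneg _) (by positivity)
          _ ≤ (C₁ * r ^ totalDeg p.1) * (C₂ * r ^ totalDeg p.2) := by
              gcongr <;> simp [hrdef, le_max_left, le_max_right]
          _ = C₁ * C₂ * r ^ (totalDeg p.1 + totalDeg p.2) := by rw [pow_add]; ring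
          _ = C₁ * C₂ * r ^ totalDeg m := by rw [← totalDeg_add, hp]
    _ = (Finset.HasAntidiagonal.antidiagonal m).card * (C₁ * C₂ * r ^ totalDeg m) := by
        rw [Finset.sum_const, nsmul_eq_mul]
    _ ≤ 2 ^ totalDeg m * (C₁ * C₂ * r ^ totalDeg m) := by
        refine mul_le_mul_of_nonneg_right (card_antidiagonal_le m) (by positivity)
    _ = C₁ * C₂ * (2 * r) ^ totalDeg m := by rw [mul_pow]; ring

lemma psconv_sum {σ ι : Type*} (s : Finset ι) (f : ι → MvPowerSeries σ ℂ)
    (h : ∀ i ∈ s, PSConv (f i)) : PSConv (∑ i ∈ s, f i) :=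
  Finset.sum_induction f PSConv (fun _ _ ha hb => ha.add hb) psconv_zero h

lemma geom_range_le {q : ℝ} (h0 : 0 ≤ q) (h1 : q < 1) (t : ℕ) :
    ∑ i ∈ Finset.range t, q ^ i ≤ (1 - q)⁻¹ := by
  have hq1 : q ≠ 1 := ne_of_lt h1
  rw [geom_sum_eq hq1]
  have h2 : (0:ℝ) < 1 - q := by linarith
  have h3 : (q ^ t - 1) / (q - 1) = (1 - q ^ t) / (1 - q) := by
    rw [show q ^ t - 1 = -(1 - q ^ t) by ring, show q - 1 = -(1 - q) by ring, neg_div_neg_eq]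
  rw [h3, ← one_div]
  have h4 : 1 - q ^ t ≤ 1 := by nlinarith [pow_nonneg h0 t]
  gcongr

lemma sum_Iic_pow_le {n : ℕ} (m : Fin n →₀ ℕ) {q : ℝ} (h0 : 0 ≤ q) (h1 : q < 1) :
    ∑ s ∈ Finset.Iic m, q ^ totalDeg s ≤ ((1 - q)⁻¹) ^ n := by
  classical
  have htd : ∀ s : Fin n →₀ ℕ, totalDeg s = ∑ i, s i := fun s =>
    Finsupp.sum_fintype _ _ (fun _ => rfl)
  calc ∑ s ∈ Finset.Iic m, q ^ totalDeg s
      = ∑ s ∈ Finset.Iic m, ∏ i, q ^ (s i) := by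
        refine Finset.sum_congr rfl fun s _ => ?_
        rw [htd, Finset.prod_pow_eq_pow_sum]
    _ = ∑ g ∈ (Finset.Iic m).image (fun s : Fin n →₀ ℕ => (s : Fin n → ℕ)), ∏ i, q ^ (g i) := by
        rw [Finset.sum_image (fun x _ y _ h => DFunLike.coe_injective h)]
    _ ≤ ∑ g ∈ Fintype.piFinset (fun i => Finset.range (m i + 1)), ∏ i, q ^ (g i) := by
        apply Finset.sum_le_sum_of_subset_of_nonneg
        · intro g hg
          simp only [Finset.mem_image] at hg
          obtain ⟨s, hs, rfl⟩ := hg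
          rw [Finset.mem_Iic] at hs
          refine Fintype.mem_piFinset.2 fun i => Finset.mem_range.2 ?_
          exact Nat.lt_succ_of_le (hs i)
        · intros; positivity
    _ = ∏ i, ∑ j ∈ Finset.range (m i + 1), q ^ j := (Finset.prod_univ_sum _ _).symm
    _ ≤ ∏ _i : Fin n, (1 - q)⁻¹ :=
        Finset.prod_le_prod (fun i _ => Finset.sum_nonneg fun j _ => by positivity)
          (fun i _ => geom_range_le h0 h1 _)
    _ = ((1 - q)⁻¹) ^ n := by rw [Finset.prod_const, Finset.card_univ, Fintype.card_fin]

lemma one_add_pow_le {x : ℝ} (h0 : 0 ≤ x) (h1 : x ≤ 1) (t : ℕ) :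
    (1 + x) ^ t ≤ 1 + (2 ^ t - 1) * x := by
  induction t with
  | zero => simp
  | succ t ih =>
    have h2 : (1:ℝ) ≤ 2 ^ t := one_le_pow₀ (by norm_num)
    have h3 : (2:ℝ) ^ (t+1) = 2 ^ t * 2 := pow_succ 2 t
    have h4 : (0:ℝ) ≤ (1+x)^t := by positivity
    have h5 : (1+x)^(t+1) = (1+x)^t * (1+x) := pow_succ _ _
    have key := mul_le_mul_of_nonneg_right ih (by linarith : (0:ℝ) ≤ 1 + x)
    have hfin : 0 ≤ (2 ^ t - 1) * (x - x * x) :=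
      mul_nonneg (by linarith) (by nlinarith)
    nlinarith [key, hfin]

lemma inv_pow_sub_one_le {q : ℝ} (h0 : 0 ≤ q) (h2 : q ≤ 1/2) (n : ℕ) :
    ((1 - q)⁻¹) ^ n - 1 ≤ 2 ^ (n+1) * q := by
  have hpos : (0:ℝ) < 1 - q := by linarith
  have hinv : (1 - q)⁻¹ ≤ 1 + 2 * q := by
    rw [inv_le_iff_one_le_mul₀ hpos]
    nlinarith
  have h1 : ((1 - q)⁻¹) ^ n ≤ (1 + 2*q) ^ n := by
    apply pow_le_pow_left₀ (by positivity) hinv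
  have h2' : (1 + 2*q) ^ n ≤ 1 + (2 ^ n - 1) * (2 * q) := one_add_pow_le (by linarith) (by linarith) n
  have h3 : (2:ℝ) ^ (n+1) = 2 ^ n * 2 := pow_succ 2 n
  have h4 : (1:ℝ) ≤ 2 ^ n := one_le_pow₀ (by norm_num)
  nlinarith

theorem psconv_inv {n : ℕ} {G : MvPowerSeries (Fin n) ℂ}
    (hG : PSConv G) (h0 : MvPowerSeries.constantCoeff G ≠ 0) :
    PSConv G⁻¹ := by
  classical
  obtain ⟨C, r, hC, hr, hb⟩ := psconv_norm hG
  set g0 := MvPowerSeries.constantCoeff G with hg0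
  set δ : ℝ := ‖g0‖ with hδ
  have hδpos : 0 < δ := norm_pos_iff.2 h0
  set C' : ℝ := max C 1 with hC'
  have hC'1 : 1 ≤ C' := le_max_right _ _
  have hC'0 : 0 < C' := lt_of_lt_of_le one_pos hC'1
  have hb' : ∀ m, ‖MvPowerSeries.coeff m G‖ ≤ C' * r ^ totalDeg m := fun m =>
    le_trans (hb m) (mul_le_mul_of_nonneg_right (le_max_left _ _) (by positivity))
  set q : ℝ := min (1/2) (δ / (C' * 2 ^ (n+1))) with hq
  have hqpos : 0 < q := lt_min (by norm_num) (by positivity)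
  have hqhalf : q ≤ 1/2 := min_le_left _ _
  have hqlt1 : q < 1 := lt_of_le_of_lt hqhalf (by norm_num)
  set ρ : ℝ := r / q with hρ
  have hρpos : 0 < ρ := div_pos (lt_of_lt_of_le one_pos hr) hqpos
  have hrρ : r = ρ * q := (div_mul_cancel₀ r hqpos.ne').symm
  have hkey : δ⁻¹ * C' * (((1 - q)⁻¹) ^ n - 1) ≤ 1 := by
    have h1 : ((1 - q)⁻¹) ^ n - 1 ≤ 2 ^ (n+1) * q := inv_pow_sub_one_le hqpos.le hqhalf n
    have h2 : q ≤ δ / (C' * 2 ^ (n+1)) := min_le_right _ _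
    calc δ⁻¹ * C' * (((1 - q)⁻¹) ^ n - 1) ≤ δ⁻¹ * C' * (2 ^ (n+1) * q) :=
          mul_le_mul_of_nonneg_left h1 (by positivity)
      _ ≤ δ⁻¹ * C' * (2 ^ (n+1) * (δ / (C' * 2 ^ (n+1)))) := by gcongr
      _ = 1 := by field_simp
  have main : ∀ d : ℕ, ∀ m : Fin n →₀ ℕ, totalDeg m = d →
      ‖MvPowerSeries.coeff m G⁻¹‖ ≤ δ⁻¹ * ρ ^ d := by
    intro d
    induction d using Nat.strong_induction_on with
    | _ d IH =>
      intro m hm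
      by_cases hm0 : m = 0
      · subst hm0
        rw [totalDeg_zero] at hm
        subst hm
        rw [MvPowerSeries.coeff_inv, if_pos rfl, pow_zero, mul_one, norm_inv]
      · rw [MvPowerSeries.coeff_inv, if_neg hm0, norm_mul, norm_neg, norm_inv]
        have hbound : ‖∑ x ∈ Finset.HasAntidiagonal.antidiagonal m,
            if x.2 < m then MvPowerSeries.coeff x.1 G * MvPowerSeries.coeff x.2 G⁻¹ else 0‖
            ≤ C' * δ⁻¹ * ρ ^ d * (((1 - q)⁻¹) ^ n - 1) := by
          calc ‖∑ x ∈ Finset.HasAntidiagonal.antidiagonal m,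
              if x.2 < m then MvPowerSeries.coeff x.1 G * MvPowerSeries.coeff x.2 G⁻¹ else 0‖
              ≤ ∑ x ∈ Finset.HasAntidiagonal.antidiagonal m, ‖if x.2 < m then
                  MvPowerSeries.coeff x.1 G * MvPowerSeries.coeff x.2 G⁻¹ else 0‖ :=
                norm_sum_le _ _
            _ ≤ ∑ x ∈ Finset.HasAntidiagonal.antidiagonal m,
                C' * δ⁻¹ * ρ ^ d * (if x.1 = 0 then 0 else q ^ totalDeg x.1) := by
                refine Finset.sum_le_sum fun x hx => ?_
                rw [Finset.HasAntidiagonal.mem_antidiagonal] at hx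
                by_cases hx2 : x.2 < m
                · have hx10 : x.1 ≠ 0 := by
                    rintro h10
                    rw [h10, zero_add] at hx
                    exact absurd (hx ▸ hx2) (lt_irrefl m)
                  have htdadd : totalDeg x.1 + totalDeg x.2 = d := by
                    rw [← totalDeg_add, hx, hm]
                  have htd2 : totalDeg x.2 < d := by
                    have := totalDeg_pos hx10
                    omega
                  have hIH := IH (totalDeg x.2) htd2 x.2 rfl
                  rw [if_pos hx2, if_neg hx10, norm_mul]
                  calc ‖MvPowerSeries.coeff x.1 G‖ * ‖MvPowerSeries.coeff x.2 G⁻¹‖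
                      ≤ (C' * r ^ totalDeg x.1) * (δ⁻¹ * ρ ^ totalDeg x.2) :=
                        mul_le_mul (hb' x.1) hIH (norm_nonneg _) (by positivity)
                    _ = C' * δ⁻¹ * ρ ^ d * q ^ totalDeg x.1 := by
                        rw [hrρ, mul_pow, ← htdadd, pow_add]
                        ring
                · rw [if_neg hx2, norm_zero]
                  have : (0:ℝ) ≤ if x.1 = 0 then 0 else q ^ totalDeg x.1 := by
                    split_ifs <;> positivity
                  positivity
            _ = C' * δ⁻¹ * ρ ^ d * ∑ x ∈ Finset.HasAntidiagonal.antidiagonal m,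
                (if x.1 = 0 then 0 else q ^ totalDeg x.1) := by rw [Finset.mul_sum]
            _ ≤ C' * δ⁻¹ * ρ ^ d * (((1 - q)⁻¹) ^ n - 1) := by
                refine mul_le_mul_of_nonneg_left ?_ (by positivity)
                -- bound the antidiagonal sum by the Iic sum minus 1
                have himg : ∑ x ∈ Finset.HasAntidiagonal.antidiagonal m,
                    (if x.1 = 0 then 0 else q ^ totalDeg x.1)
                    = ∑ s ∈ (Finset.HasAntidiagonal.antidiagonal m).image Prod.fst,
                      (if s = 0 then 0 else q ^ totalDeg s) := by
                  rw [Finset.sum_image]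
                  intro x hx y hy hxy
                  rw [Finset.mem_coe, Finset.HasAntidiagonal.mem_antidiagonal] at hx hy
                  have h2 : x.2 = y.2 := by
                    apply add_left_cancel (a := x.1)
                    rw [hx, hxy, hy]
                  exact Prod.ext hxy h2
                rw [himg]
                have hsub : (Finset.HasAntidiagonal.antidiagonal m).image Prod.fst ⊆ Finset.Iic m := by
                  intro s hs
                  simp only [Finset.mem_image] at hs
                  obtain ⟨x, hx, rfl⟩ := hs
                  rw [Finset.HasAntidiagonal.mem_antidiagonal] at hx
                  exact Finset.mem_Iic.2 (le_iff_exists_add.2 ⟨x.2, hx.symm⟩)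
                calc ∑ s ∈ (Finset.HasAntidiagonal.antidiagonal m).image Prod.fst,
                    (if s = 0 then 0 else q ^ totalDeg s)
                    ≤ ∑ s ∈ Finset.Iic m, (if s = 0 then 0 else q ^ totalDeg s) := by
                      refine Finset.sum_le_sum_of_subset_of_nonneg hsub fun s _ _ => ?_
                      split_ifs <;> positivity
                  _ ≤ ((1 - q)⁻¹) ^ n - 1 := by
                      have h0mem : (0 : Fin n →₀ ℕ) ∈ Finset.Iic m := Finset.mem_Iic.2 zero_le
                      have hsplit := Finset.add_sum_erase _ (fun s => q ^ totalDeg s) h0mem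
                      have herase : ∑ s ∈ Finset.Iic m, (if s = 0 then 0 else q ^ totalDeg s)
                          = ∑ s ∈ (Finset.Iic m).erase 0, q ^ totalDeg s := by
                        rw [← Finset.sum_erase (Finset.Iic m)
                          (f := fun s => if s = 0 then 0 else q ^ totalDeg s) (a := 0) (by simp)]
                        refine Finset.sum_congr rfl fun s hs => ?_
                        rw [if_neg (Finset.ne_of_mem_erase hs)]
                      rw [herase]
                      have := sum_Iic_pow_le m hqpos.le hqlt1
                      simp only [totalDeg_zero, pow_zero] at hsplit
                      linarith
        calc δ⁻¹ * ‖∑ x ∈ Finset.HasAntidiagonal.antidiagonal m,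
            if x.2 < m then MvPowerSeries.coeff x.1 G * MvPowerSeries.coeff x.2 G⁻¹ else 0‖
            ≤ δ⁻¹ * (C' * δ⁻¹ * ρ ^ d * (((1 - q)⁻¹) ^ n - 1)) :=
              mul_le_mul_of_nonneg_left hbound (by positivity)
          _ = (δ⁻¹ * ρ ^ d) * (δ⁻¹ * C' * (((1 - q)⁻¹) ^ n - 1)) := by ring
          _ ≤ (δ⁻¹ * ρ ^ d) * 1 := mul_le_mul_of_nonneg_left hkey (by positivity)
          _ = δ⁻¹ * ρ ^ d := mul_one _
  exact ⟨δ⁻¹, ρ, hρpos, fun m => main (totalDeg m) m rfl⟩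

lemma psconv_of_mul {n : ℕ} {A G E : MvPowerSeries (Fin n) ℂ}
    (hG : PSConv G) (h0 : MvPowerSeries.constantCoeff G ≠ 0)
    (hE : PSConv E) (h : A * G = E) : PSConv A := by
  have hA : A = E * G⁻¹ := by
    calc A = A * (G * G⁻¹) := by rw [MvPowerSeries.mul_inv_cancel G h0, mul_one]
    _ = (A * G) * G⁻¹ := by ring
    _ = E * G⁻¹ := by rw [h]
  rw [hA]
  exact (hE.mul (psconv_inv hG h0))

def QC {n : ℕ} (G : PowerSeries (MvPowerSeries (Fin n) ℂ)) : Prop :=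
  ∀ k, PSConv (PowerSeries.coeff k G)

lemma QC.add {n : ℕ} {F G : PowerSeries (MvPowerSeries (Fin n) ℂ)} (hF : QC F) (hG : QC G) :
    QC (F + G) := fun k => by rw [map_add]; exact (hF k).add (hG k)

lemma QC.mul {n : ℕ} {F G : PowerSeries (MvPowerSeries (Fin n) ℂ)} (hF : QC F) (hG : QC G) :
    QC (F * G) := fun k => by
  rw [PowerSeries.coeff_mul]
  exact psconv_sum _ _ fun p _ => (hF p.1).mul (hG p.2)

lemma QC.one {n : ℕ} : QC (1 : PowerSeries (MvPowerSeries (Fin n) ℂ)) := fun k => by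
  rw [PowerSeries.coeff_one]
  split_ifs
  · exact psconv_one
  · exact psconv_zero

lemma QC.pow {n : ℕ} {F : PowerSeries (MvPowerSeries (Fin n) ℂ)} (hF : QC F) (t : ℕ) :
    QC (F ^ t) := by
  induction t with
  | zero => rw [pow_zero]; exact QC.one
  | succ t ih => rw [pow_succ]; exact ih.mul hF

lemma QC.prod {n : ℕ} {ι : Type*} (s : Finset ι) (f : ι → PowerSeries (MvPowerSeries (Fin n) ℂ))
    (h : ∀ i ∈ s, QC (f i)) : QC (∏ i ∈ s, f i) :=
  Finset.prod_induction f QC (fun _ _ ha hb => ha.mul hb) QC.one h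

lemma dvd_prod_sub_prod {R : Type*} [CommRing R] {ι : Type*} (s : Finset ι) (f g : ι → R) (d : R)
    (h : ∀ i ∈ s, d ∣ f i - g i) : d ∣ (∏ i ∈ s, f i) - ∏ i ∈ s, g i := by
  classical
  induction s using Finset.induction_on with
  | empty => simp
  | insert a s hx ih =>
    rw [Finset.prod_insert hx, Finset.prod_insert hx]
    have h1 : f a * ∏ i ∈ s, f i - g a * ∏ i ∈ s, g i
        = f a * ((∏ i ∈ s, f i) - ∏ i ∈ s, g i) + (f a - g a) * ∏ i ∈ s, g i := by ring
    rw [h1]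
    exact dvd_add (Dvd.dvd.mul_left (ih fun i hi => h i (Finset.mem_insert_of_mem hi)) _)
      ((h a (Finset.mem_insert_self a s)).mul_right _)

lemma step_div {n : ℕ} (H G : PowerSeries (MvPowerSeries (Fin n) ℂ)) (E : MvPowerSeries (Fin n) ℂ)
    (hHc : ∀ j, PSConv (PowerSeries.coeff j H))
    (hH0 : MvPowerSeries.constantCoeff
      (PowerSeries.coeff 0 H) ≠ 0)
    (k : ℕ) (hGlt : ∀ j < k, PSConv (PowerSeries.coeff j G))
    (hE : PSConv E) (heq : PowerSeries.coeff k (G * H) = E) :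
    PSConv (PowerSeries.coeff k G) := by
  rw [PowerSeries.coeff_mul] at heq
  have hmem : ((k, 0) : ℕ × ℕ) ∈ Finset.HasAntidiagonal.antidiagonal k := by simp
  rw [← Finset.add_sum_erase _ _ hmem] at heq
  have heq2 : PowerSeries.coeff k G *
      PowerSeries.coeff 0 H
      = E - ∑ p ∈ (Finset.HasAntidiagonal.antidiagonal k).erase (k, 0),
          PowerSeries.coeff p.1 G *
          PowerSeries.coeff p.2 H :=
    eq_sub_of_add_eq heq
  refine psconv_of_mul (hHc 0) hH0 (hE.sub (psconv_sum _ _ fun p hp => ?_)) heq2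
  have hp1 : p.1 < k := by
    have h1 := Finset.mem_of_mem_erase hp
    have h2 := Finset.ne_of_mem_erase hp
    rw [Finset.HasAntidiagonal.mem_antidiagonal] at h1
    rcases Nat.lt_or_ge p.1 k with h | h
    · exact h
    · exfalso
      apply h2
      have : p.1 = k := by omega
      have : p.2 = 0 := by omega
      exact Prod.ext (by omega) this
  exact (hGlt p.1 hp1).mul (hHc p.2)

theorem statement6 (n : ℕ) (hn : 1 ≤ n) (N : ℕ) (hN : 2 ≤ N)
    (H : PowerSeries (MvPowerSeries (Fin n) ℂ))
    (hHconv : PS2Conv H)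
    (hH0 : MvPowerSeries.constantCoeff
        (PowerSeries.coeff 0 H) ≠ 0)
    -- the polynomials `P_r`, `r = 1,…,N−1`, in `N` variables with power-series coefficients
    (P : Fin (N - 1) → MvPolynomial (Fin N) (PowerSeries (MvPowerSeries (Fin n) ℂ)))
    -- every coefficient of every `P_r` has no term independent of `x` ...
    (hP0 : ∀ (r : Fin (N - 1)) (m : Fin N →₀ ℕ),
      PowerSeries.coeff 0 (MvPolynomial.coeff m (P r)) = 0)
    -- ... and all its `x`-coefficients are convergent
    (hPconv : ∀ (r : Fin (N - 1)) (m : Fin N →₀ ℕ) (k : ℕ),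
      PSConv (PowerSeries.coeff k (MvPolynomial.coeff m (P r))))
    (χ : Fin (N - 1) → PowerSeries (MvPowerSeries (Fin n) ℂ))
    (hχconv : ∀ (r : Fin (N - 1)) (k : ℕ),
      PSConv (PowerSeries.coeff k (χ r)))
    (F : Fin N → PowerSeries (MvPowerSeries (Fin n) ℂ))
    -- all `x`-coefficients of `F_N` are convergent
    (hFN : ∀ k : ℕ, PSConv (PowerSeries.coeff k
      (F ⟨N - 1, by omega⟩)))
    -- the first equation: `(F₁ + F_N²)·H + P₁(F₁,…,F_N) = χ₁`
    (heq1 : (F ⟨0, by omega⟩ + F ⟨N - 1, by omega⟩ ^ 2) * H +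
        MvPolynomial.eval F (P ⟨0, by omega⟩) = χ ⟨0, by omega⟩)
    -- the remaining equations: `F_r·H + P_r(F₁,…,F_N) = χ_r` for `r = 2,…,N−1`
    (heqr : ∀ r : Fin (N - 1), r ≠ ⟨0, by omega⟩ →
      F ⟨r.1, by omega⟩ * H + MvPolynomial.eval F (P r) = χ r) :
    ∀ l : Fin N, l ≠ ⟨N - 1, by omega⟩ →
      ∀ k : ℕ, PSConv (PowerSeries.coeff k (F l)) := by
  classical
  have hHc : ∀ j : ℕ, PSConv (PowerSeries.coeff j H) := by
    obtain ⟨C, r, hr, hb⟩ := hHconv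
    intro j
    refine ⟨C * r ^ j, r, hr, fun m => ?_⟩
    have := hb j m
    rwa [pow_add, ← mul_assoc] at this
  have hlastne : (⟨0, by omega⟩ : Fin N) ≠ ⟨N - 1, by omega⟩ := by
    intro hcon
    have := congrArg Fin.val hcon
    simp only at this
    omega
  have main : ∀ k : ℕ, ∀ l : Fin N, l ≠ ⟨N - 1, by omega⟩ →
      PSConv (PowerSeries.coeff k (F l)) := by
    intro k
    induction k using Nat.strong_induction_on with
    | _ k IH =>
    -- truncated family
    set F' : Fin N → PowerSeries (MvPowerSeries (Fin n) ℂ) := fun l' =>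
      if l' = ⟨N - 1, by omega⟩ then F l'
      else PowerSeries.mk fun j =>
        if j < k then PowerSeries.coeff j (F l') else 0 with hF'def
    have hQF' : ∀ l', QC (F' l') := by
      intro l'
      by_cases h : l' = ⟨N - 1, by omega⟩
      · rw [hF'def]
        simp only [if_pos h]
        subst h
        exact fun j => hFN j
      · intro j
        rw [hF'def]
        simp only [if_neg h, PowerSeries.coeff_mk]
        by_cases hj : j < k
        · rw [if_pos hj]; exact IH j hj l' h
        · rw [if_neg hj]; exact psconv_zero
    have hdvd : ∀ l', (PowerSeries.X : PowerSeries (MvPowerSeries (Fin n) ℂ)) ^ k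
        ∣ F l' - F' l' := by
      intro l'
      rw [PowerSeries.X_pow_dvd_iff]
      intro i hi
      rw [map_sub]
      by_cases h : l' = ⟨N - 1, by omega⟩
      · rw [hF'def]; simp only [if_pos h, sub_self]
      · rw [hF'def]; simp only [if_neg h, PowerSeries.coeff_mk, if_pos hi, sub_self]
    have hcoeff_eval : ∀ r : Fin (N - 1),
        PowerSeries.coeff k (MvPolynomial.eval F (P r))
        = PowerSeries.coeff k (MvPolynomial.eval F' (P r)) := by
      intro r
      have hdvd2 : (PowerSeries.X : PowerSeries (MvPowerSeries (Fin n) ℂ)) ^ (k + 1)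
          ∣ MvPolynomial.eval F (P r) - MvPolynomial.eval F' (P r) := by
        rw [MvPolynomial.eval_eq, MvPolynomial.eval_eq, ← Finset.sum_sub_distrib]
        refine Finset.dvd_sum fun m _ => ?_
        have h1 : MvPolynomial.coeff m (P r) * ∏ i ∈ m.support, F i ^ m i
            - MvPolynomial.coeff m (P r) * ∏ i ∈ m.support, F' i ^ m i
            = MvPolynomial.coeff m (P r)
              * ((∏ i ∈ m.support, F i ^ m i) - ∏ i ∈ m.support, F' i ^ m i) := by ring
        rw [h1, pow_succ']
        refine mul_dvd_mul (PowerSeries.X_dvd_iff.2 ?_) (dvd_prod_sub_prod _ _ _ _ fun i _ =>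
          dvd_trans (hdvd i) (sub_dvd_pow_sub_pow (F i) (F' i) (m i)))
        rw [← PowerSeries.coeff_zero_eq_constantCoeff_apply]
        exact hP0 r m
      have hk := PowerSeries.X_pow_dvd_iff.1 hdvd2 k (lt_add_one k)
      rw [map_sub, sub_eq_zero] at hk
      exact hk
    have heval : ∀ r : Fin (N - 1),
        PSConv (PowerSeries.coeff k (MvPolynomial.eval F' (P r))) := by
      intro r
      rw [MvPolynomial.eval_eq, map_sum]
      refine psconv_sum _ _ fun m _ => ?_
      exact QC.mul (fun j => hPconv r m j)
        (QC.prod _ _ fun i _ => QC.pow (hQF' i) (m i)) k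
    intro l hl
    have hlval : l.1 < N - 1 := by
      have h2 := l.2
      have h3 : l.1 ≠ N - 1 := fun h => hl (Fin.ext h)
      omega
    set r : Fin (N - 1) := ⟨l.1, hlval⟩ with hrdef
    by_cases hr0 : r = ⟨0, by omega⟩
    · -- the special equation
      have hl0 : l = ⟨0, by omega⟩ := by
        have := congrArg Fin.val hr0
        exact Fin.ext this
      set G : PowerSeries (MvPowerSeries (Fin n) ℂ) :=
        F ⟨0, by omega⟩ + F ⟨N - 1, by omega⟩ ^ 2 with hGdef
      have hsq : QC (F (⟨N - 1, by omega⟩ : Fin N) ^ 2) := QC.pow (fun j => hFN j) 2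
      have heqk : PowerSeries.coeff k (G * H)
          = PowerSeries.coeff k (χ ⟨0, by omega⟩)
            - PowerSeries.coeff k
              (MvPolynomial.eval F' (P ⟨0, by omega⟩)) := by
        rw [← hcoeff_eval ⟨0, by omega⟩, ← map_sub]
        congr 1
        rw [hGdef]
        exact eq_sub_of_add_eq heq1
      have hGlt : ∀ j < k, PSConv (PowerSeries.coeff j G) := by
        intro j hj
        rw [hGdef, map_add]
        exact (IH j hj ⟨0, by omega⟩ hlastne).add (hsq j)
      have hGk : PSConv (PowerSeries.coeff k G) :=
        step_div H G _ hHc hH0 k hGlt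
          ((hχconv ⟨0, by omega⟩ k).sub (heval ⟨0, by omega⟩)) heqk
      have hsplit : PowerSeries.coeff k (F ⟨0, by omega⟩)
          = PowerSeries.coeff k G
            - PowerSeries.coeff k
              (F ⟨N - 1, by omega⟩ ^ 2) := by
        rw [hGdef, map_add, add_sub_cancel_right]
      rw [hl0, hsplit]
      exact hGk.sub (hsq k)
    · -- generic equation
      have heq := heqr r hr0
      have hFl : F ⟨r.1, by omega⟩ = F l := by congr 1
      have heqk : PowerSeries.coeff k (F l * H)
          = PowerSeries.coeff k (χ r)
            - PowerSeries.coeff k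
              (MvPolynomial.eval F' (P r)) := by
        rw [← hcoeff_eval r, ← map_sub]
        congr 1
        rw [← hFl]
        exact eq_sub_of_add_eq heq
      exact step_div H (F l) _ hHc hH0 k (fun j hj => IH j hj l hl)
        ((hχconv r k).sub (heval r)) heqk
  exact fun l hl k => main k l hl
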